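/- Under the interference model with guard zone Δ > 0, if (X₁ → X₂) and (X₃ → X₄) are two simultaneous successful transmissions on the same channel (so dist(X₃, X₂) ≥ (1+Δ)·dist(X₁, X₂) and dist(X₁, X₄) ≥ (1+Δ)·dist(X₃, X₄)), then dist(X₂, X₄) ≥ (Δ/2)·(dist(X₁, X₂) + dist(X₃, X₄)). -/
import Mathlib

/-- Under the interference model with guard zone `Δ > 0`, two simultaneous successful
receptions `X₂`, `X₄` are separated by at least `(Δ/2)` times the sum of the hop lengths. -/
theorem receivers_separation (Δ : ℝ) (hΔ : 0 < Δ)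
    (X₁ X₂ X₃ X₄ : EuclideanSpace ℝ (Fin 2))
    (h₁ : dist X₃ X₂ ≥ (1 + Δ) * dist X₁ X₂)
    (h₂ : dist X₁ X₄ ≥ (1 + Δ) * dist X₃ X₄) :
    dist X₂ X₄ ≥ (Δ / 2) * (dist X₁ X₂ + dist X₃ X₄) := by
  have t1 : dist X₃ X₂ ≤ dist X₃ X₄ + dist X₄ X₂ := dist_triangle _ _ _
  have t2 : dist X₁ X₄ ≤ dist X₁ X₂ + dist X₂ X₄ := dist_triangle _ _ _
  have e1 : dist X₄ X₂ = dist X₂ X₄ := dist_comm _ _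
  linarith
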